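/- Fix N, h = 1/N, differentiable convex F_i : ℝ² → ℝ, G_i(u) = F_i(ψ_i(u)) with ψ_i the periodic difference-quotient maps, and define A^N(m,u) = (-G(u) + log m, L_u* m) on ℝ_+^N × ℝ^N, where log m = (log m_1,…,log m_N) and L_u* is the adjoint of the Jacobian of G at u. Then A^N is monotone: for all (m,u), (θ,v) with m_i, θ_i > 0, ⟨A^N(m,u) - A^N(θ,v), (m,u) - (θ,v)⟩_{ℝ^N × ℝ^N} ≥ 0. -/

import Mathlib

open Filter Set Topology

lemma foc {n : ℕ} (f : (Fin n → ℝ) → ℝ) (hf : ConvexOn ℝ Set.univ f)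
    (hfd : Differentiable ℝ f) (x y : Fin n → ℝ) :
    fderiv ℝ f x (y - x) ≤ f y - f x := by
  set c := y - x with hc
  set g : ℝ → ℝ := fun t => f (x + t • c) with hgdef
  have hline : HasDerivAt (fun t : ℝ => x + t • c) c 0 := by
    simpa using ((hasDerivAt_id (0:ℝ)).smul_const c).const_add x
  have hg : HasDerivAt g (fderiv ℝ f x c) 0 := by
    have := (hfd (x + (0:ℝ) • c)).hasFDerivAt.comp_hasDerivAt (0:ℝ) hline
    simpa [hgdef, Function.comp_def] using this
  have hslope : ∀ t ∈ Set.Ioo (0:ℝ) 1, slope g 0 t ≤ f y - f x := by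
    intro t ht
    have hxy : x + t • c = (1 - t) • x + t • y := by
      rw [hc]; module
    have h1 : g t ≤ (1 - t) * f x + t * f y := by
      have := hf.2 (Set.mem_univ x) (Set.mem_univ y)
        (by linarith [ht.2] : (0:ℝ) ≤ 1 - t) (le_of_lt ht.1) (by ring)
      simpa [hgdef, hxy] using this
    have hg0 : g 0 = f x := by simp [hgdef]
    rw [slope_def_field, sub_zero, div_le_iff₀ ht.1, hg0]
    nlinarith [ht.1, ht.2]
  have htend : Tendsto (slope g 0) (𝓝[>] 0) (𝓝 (fderiv ℝ f x c)) :=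
    (hasDerivAt_iff_tendsto_slope.mp hg).mono_left
      (nhdsWithin_mono 0 fun t ht => ne_of_gt ht)
  exact le_of_tendsto htend
    (eventually_of_mem (Ioo_mem_nhdsGT_of_mem ⟨le_refl _, zero_lt_one⟩) hslope)

theorem stmt_15 (N : ℕ) [NeZero N] (F : Fin N → ℝ × ℝ → ℝ)
    (hF : ∀ i, ConvexOn ℝ Set.univ (F i))
    (hFd : ∀ i, Differentiable ℝ (F i))
    (G : Fin N → (Fin N → ℝ) → ℝ)
    (hG : ∀ i u, G i u = F i ((u i - u (i+1)) * N, (u i - u (i-1)) * N))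
    (Lstar : (Fin N → ℝ) → (Fin N → ℝ) → Fin N → ℝ)
    (hL : ∀ u m i, Lstar u m i = ∑ j, fderiv ℝ (G j) u (Pi.single i 1) * m j)
    (u v m θ : Fin N → ℝ) (hm : ∀ i, 0 < m i) (hθ : ∀ i, 0 < θ i) :
    0 ≤ ∑ i, (((-G i u + Real.log (m i)) - (-G i v + Real.log (θ i))) * (m i - θ i)
          + (Lstar u m i - Lstar v θ i) * (u i - v i)) := by
  -- the linear maps ψ_j
  let pr : Fin N → ((Fin N → ℝ) →L[ℝ] ℝ) := fun i =>
    ContinuousLinearMap.proj (R := ℝ) (φ := fun _ : Fin N => ℝ) i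
  set L : Fin N → ((Fin N → ℝ) →L[ℝ] ℝ × ℝ) := fun j =>
    ((N:ℝ) • (pr j - pr (j+1))).prod ((N:ℝ) • (pr j - pr (j-1))) with hLdef
  have hGL : ∀ j, G j = fun w => F j (L j w) := by
    intro j; funext w
    simp [hG, hLdef, pr, ContinuousLinearMap.prod_apply, mul_comm]
  have hGconv : ∀ j, ConvexOn ℝ Set.univ (G j) := by
    intro j
    rw [hGL j]
    refine ⟨convex_univ, fun x _ y _ a b ha hb hab => ?_⟩
    have : L j (a • x + b • y) = a • L j x + b • L j y := by
      simp [map_add, map_smul]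
    simp only []
    show F j (L j (a • x + b • y)) ≤ a • F j (L j x) + b • F j (L j y)
    rw [this]
    exact (hF j).2 (Set.mem_univ _) (Set.mem_univ _) ha hb hab
  have hGdiff : ∀ j, Differentiable ℝ (G j) := by
    intro j; rw [hGL j]
    exact (hFd j).comp (L j).differentiable
  -- linearity of the derivative over coordinates
  have key : ∀ (w p mm : Fin N → ℝ),
      ∑ i, Lstar w mm i * p i = ∑ j, mm j * fderiv ℝ (G j) w (p) := by
    intro w p mm
    simp only [hL, Finset.sum_mul]
    rw [Finset.sum_comm]
    refine Finset.sum_congr rfl fun j _ => ?_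
    have hp : p = ∑ i, p i • (Pi.single i (1:ℝ) : Fin N → ℝ) := by
      funext k
      simp only [Finset.sum_apply, Pi.smul_apply, Pi.single_apply, smul_eq_mul,
        mul_ite, mul_one, mul_zero]
      simp
    calc ∑ i, fderiv ℝ (G j) w (Pi.single i 1) * mm j * p i
        = mm j * ∑ i, p i * fderiv ℝ (G j) w (Pi.single i 1) := by
          rw [Finset.mul_sum]; exact Finset.sum_congr rfl fun i _ => by ring
      _ = mm j * fderiv ℝ (G j) w p := by
          congr 1
          conv_rhs => rw [hp]
          rw [map_sum]
          simp [smul_eq_mul]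
  have e1 : ∑ i, Lstar u m i * (u i - v i) = ∑ j, m j * fderiv ℝ (G j) u (u - v) := by
    simpa only [Pi.sub_apply] using key u (u - v) m
  have e2 : ∑ i, Lstar v θ i * (u i - v i) = ∑ j, θ j * fderiv ℝ (G j) v (u - v) := by
    simpa only [Pi.sub_apply] using key v (u - v) θ
  set A := ∑ i, (Real.log (m i) - Real.log (θ i)) * (m i - θ i) with hA
  set B := ∑ j, m j * (fderiv ℝ (G j) u (u - v) - (G j u - G j v)) with hB
  set C := ∑ j, θ j * ((G j u - G j v) - fderiv ℝ (G j) v (u - v)) with hC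
  have hBe : B = (∑ i, Lstar u m i * (u i - v i)) - ∑ i, (G i u - G i v) * m i := by
    rw [e1, hB, ← Finset.sum_sub_distrib]
    exact Finset.sum_congr rfl fun i _ => by ring
  have hCe : C = (∑ i, (G i u - G i v) * θ i) - ∑ i, Lstar v θ i * (u i - v i) := by
    rw [e2, hC, ← Finset.sum_sub_distrib]
    exact Finset.sum_congr rfl fun i _ => by ring
  have expand : ∑ i, (((-G i u + Real.log (m i)) - (-G i v + Real.log (θ i))) * (m i - θ i)
          + (Lstar u m i - Lstar v θ i) * (u i - v i)) = A + B + C := by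
    rw [hBe, hCe, hA]
    simp only [← Finset.sum_sub_distrib, ← Finset.sum_add_distrib]
    exact Finset.sum_congr rfl fun i _ => by ring
  rw [expand]
  have h0A : 0 ≤ A := by
    apply Finset.sum_nonneg
    intro i _
    rcases le_total (θ i) (m i) with h | h
    · exact mul_nonneg (sub_nonneg.2 (Real.log_le_log (hθ i) h)) (sub_nonneg.2 h)
    · have := mul_nonneg (sub_nonneg.2 (Real.log_le_log (hm i) h)) (sub_nonneg.2 h)
      nlinarith [this]
  have h0B : 0 ≤ B := by
    apply Finset.sum_nonneg
    intro j _
    have h := foc (G j) (hGconv j) (hGdiff j) u v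
    have hneg : fderiv ℝ (G j) u (u - v) = -(fderiv ℝ (G j) u (v - u)) := by
      rw [← map_neg, neg_sub]
    exact mul_nonneg (hm j).le (by rw [hneg]; linarith)
  have h0C : 0 ≤ C := by
    apply Finset.sum_nonneg
    intro j _
    have h := foc (G j) (hGconv j) (hGdiff j) v u
    exact mul_nonneg (hθ j).le (by linarith)
  linarith
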